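/- Let X ⊂ {0,1}^n be finite nonempty, A ∈ {0,1}^{K×n} with Ax ∈ {0,1}^K for all x ∈ X, θ ∈ ℝ^n, and let x*, x** be both minimizers of ⟨θ, x⟩ over X. Suppose Δ ∈ ℝ^K has sign pattern matching ν* := A x* (nonneg on support, nonpos off support) and x* remains a minimizer of ⟨θ + AᵀΔ, x⟩ over X. Then ⟨Δ, A x*⟩ = ⟨Δ, A x**⟩. -/

import Mathlib

open Matrix in
/-- Two minimizers of the original cost receive the same message value under an
admissible update Δ: ⟨Δ, A x*⟩ = ⟨Δ, A x**⟩. -/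
theorem admissible_update_equal_message_value
    (n K : ℕ) (X : Finset (Fin n → ℝ)) (hX : X.Nonempty)
    (hXbin : ∀ x ∈ X, ∀ t, x t = 0 ∨ x t = 1)
    (A : Matrix (Fin K) (Fin n) ℝ)
    (hA : ∀ x ∈ X, ∀ s, A.mulVec x s = 0 ∨ A.mulVec x s = 1)
    (θ : Fin n → ℝ)
    (xstar xss : Fin n → ℝ) (hxstar : xstar ∈ X) (hxss : xss ∈ X)
    (hxstarmin : ∀ x ∈ X, dotProduct θ xstar ≤ dotProduct θ x)
    (hxssmin : ∀ x ∈ X, dotProduct θ xss ≤ dotProduct θ x)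
    (Δ : Fin K → ℝ)
    (hΔ : ∀ s, (A.mulVec xstar s = 1 → 0 ≤ Δ s) ∧ (A.mulVec xstar s = 0 → Δ s ≤ 0))
    (hxstarmin' : ∀ x ∈ X,
      dotProduct (θ + A.transpose.mulVec Δ) xstar ≤
        dotProduct (θ + A.transpose.mulVec Δ) x) :
    dotProduct Δ (A.mulVec xstar) = dotProduct Δ (A.mulVec xss) := by
  have hθeq : dotProduct θ xstar = dotProduct θ xss :=
    le_antisymm (hxstarmin _ hxss) (hxssmin _ hxstar)
  have e : ∀ x, dotProduct (θ + A.transpose.mulVec Δ) x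
      = dotProduct θ x + dotProduct Δ (A.mulVec x) := by
    intro x
    rw [add_dotProduct, Matrix.mulVec_transpose, ← Matrix.dotProduct_mulVec]
  have h1 : dotProduct Δ (A.mulVec xstar) ≤ dotProduct Δ (A.mulVec xss) := by
    have := hxstarmin' _ hxss
    rw [e, e] at this
    linarith
  have h2 : dotProduct Δ (A.mulVec xss) ≤ dotProduct Δ (A.mulVec xstar) := by
    apply Finset.sum_le_sum
    intro s _
    rcases hA xstar hxstar s with h0 | h1'
    · rw [h0, mul_zero]
      rcases hA xss hxss s with h0' | h1''
      · rw [h0', mul_zero]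
      · rw [h1'', mul_one]; exact (hΔ s).2 h0
    · rw [h1', mul_one]
      rcases hA xss hxss s with h0' | h1''
      · rw [h0', mul_zero]; exact (hΔ s).1 h1'
      · rw [h1'', mul_one]
  linarith
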